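/- Fix an integer N ≥ 1 and a real number α, and for j = 1, …, N set a_j = (2/(2N+1))·sin²(jπ/(2N+1)) and b_j = cos²(jπ/(2N+1)). Assume d_j := 1 + b_j(e^{−iα} − 1) ≠ 0 for all j, and define the rotated-branch-cut Padé coefficients A_j = e^{−iα/2} a_j / d_j², B_j = b_j e^{−iα} / d_j, C₀ = e^{iα/2}(1 + Σ_{j=1}^{N} a_j(e^{−iα}−1)/d_j), and R₀ = C₀ + Σ_{j=1}^{N} A_j/B_j. Then for every z ∈ ℂ such that 1 + B_j z ≠ 0 for all j, setting z_α := e^{−iα}(1+z) − 1, the exact identity e^{iα/2}·(1 + Σ_{j=1}^{N} a_j z_α/(1 + b_j z_α)) = R₀ − Σ_{j=1}^{N} A_j/(B_j(1 + B_j z)) holds. -/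

import Mathlib

set_option maxHeartbeats 1000000


open Complex Real Finset

/-- Exact partial-fraction identity for the rotating branch-cut Padé approximation
of `(1+z)^{1/2}` (paper's equation (13) with coefficients `A_j`, `B_j`, `C₀`, `R₀`):
`e^{iα/2}·(1 + Σ_j a_j z_α/(1 + b_j z_α)) = R₀ − Σ_j A_j/(B_j(1 + B_j z))`, where
`z_α = e^{−iα}(1+z) − 1`. -/
theorem rotated_pade_partial_fractions
    (N : ℕ) (hN : 1 ≤ N) (α : ℝ)
    (a b : ℕ → ℝ)
    (ha : ∀ j, a j = (2 / (2 * N + 1)) * Real.sin (j * Real.pi / (2 * N + 1)) ^ 2)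
    (hb : ∀ j, b j = Real.cos (j * Real.pi / (2 * N + 1)) ^ 2)
    (d : ℕ → ℂ)
    (hd : ∀ j, d j = 1 + (b j : ℂ) * (Complex.exp (-Complex.I * α) - 1))
    (hdne : ∀ j ∈ Finset.Icc 1 N, d j ≠ 0)
    (A B : ℕ → ℂ)
    (hA : ∀ j, A j = Complex.exp (-Complex.I * α / 2) * (a j : ℂ) / (d j) ^ 2)
    (hB : ∀ j, B j = (b j : ℂ) * Complex.exp (-Complex.I * α) / d j)
    (C₀ : ℂ)
    (hC₀ : C₀ = Complex.exp (Complex.I * α / 2) *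
      (1 + ∑ j ∈ Finset.Icc 1 N, (a j : ℂ) * (Complex.exp (-Complex.I * α) - 1) / d j))
    (R₀ : ℂ) (hR₀ : R₀ = C₀ + ∑ j ∈ Finset.Icc 1 N, A j / B j)
    (z : ℂ) (hz : ∀ j ∈ Finset.Icc 1 N, 1 + B j * z ≠ 0)
    (zα : ℂ) (hzα : zα = Complex.exp (-Complex.I * α) * (1 + z) - 1) :
    Complex.exp (Complex.I * α / 2) *
        (1 + ∑ j ∈ Finset.Icc 1 N, (a j : ℂ) * zα / (1 + (b j : ℂ) * zα)) =
      R₀ - ∑ j ∈ Finset.Icc 1 N, A j / (B j * (1 + B j * z)) := by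
  set E := Complex.exp (Complex.I * α / 2) with hE
  set e := Complex.exp (-Complex.I * α) with he
  have hEne : E ≠ 0 := Complex.exp_ne_zero _
  have hene : e ≠ 0 := Complex.exp_ne_zero _
  have hEe : Complex.exp (-Complex.I * α / 2) = E * e := by
    rw [hE, he, ← Complex.exp_add]; congr 1; ring
  -- b j ≠ 0 for j in range
  have hbpos : ∀ j ∈ Finset.Icc 1 N, (0:ℝ) < b j := by
    intro j hj
    rw [Finset.mem_Icc] at hj
    rw [hb]
    have hple : (j:ℝ) ≤ N := by exact_mod_cast hj.2
    have hNpos : (0:ℝ) < 2 * N + 1 := by positivity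
    have hcos : 0 < Real.cos (j * Real.pi / (2 * N + 1)) := by
      apply Real.cos_pos_of_mem_Ioo
      constructor
      · have : (0:ℝ) ≤ j * Real.pi / (2 * N + 1) := by positivity
        linarith [Real.pi_pos]
      · have : (j:ℝ) * Real.pi / (2 * N + 1) < Real.pi / 2 := by
          rw [div_lt_div_iff₀ hNpos (by norm_num : (0:ℝ) < 2)]
          nlinarith [Real.pi_pos]
        exact this
    positivity
  -- key termwise identity
  have key : ∀ j ∈ Finset.Icc 1 N,
      E * ((a j : ℂ) * zα / (1 + (b j : ℂ) * zα)) =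
        E * ((a j : ℂ) * (e - 1) / d j) + A j / B j - A j / (B j * (1 + B j * z)) := by
    intro j hj
    have hbj : ((b j : ℂ)) ≠ 0 := by
      exact_mod_cast (hbpos j hj).ne'
    have hdj : d j ≠ 0 := hdne j hj
    have hzj : 1 + B j * z ≠ 0 := hz j hj
    have hsum : d j + (b j : ℂ) * e * z ≠ 0 := by
      have h2 : d j + (b j : ℂ) * e * z = d j * (1 + B j * z) := by
        rw [hB]; field_simp
      rw [h2]
      exact mul_ne_zero hdj hzj
    have hS : 1 + (b j : ℂ) * zα = d j + (b j : ℂ) * e * z := by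
      rw [hzα, hd]; ring
    have h2 : A j / B j = E * (a j : ℂ) / (d j * (b j : ℂ)) := by
      rw [hA, hB, hEe]
      field_simp
    have hw : B j * (1 + B j * z) = (b j : ℂ) * e * (d j + (b j : ℂ) * e * z) / (d j) ^ 2 := by
      rw [hB]; field_simp
    have h3 : A j / (B j * (1 + B j * z)) =
        E * (a j : ℂ) / ((b j : ℂ) * (d j + (b j : ℂ) * e * z)) := by
      rw [hA, hEe, hw]
      rw [div_div_div_cancel_right₀]
      · field_simp
      · exact pow_ne_zero 2 hdj
    rw [hS, hzα, h2, h3]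
    have hsum' : d j + e * z * (b j : ℂ) ≠ 0 := by convert hsum using 1; ring
    field_simp
    rw [hd]
    ring
  -- assemble
  have hsum_eq : ∑ j ∈ Finset.Icc 1 N, E * ((a j : ℂ) * zα / (1 + (b j : ℂ) * zα)) =
      ∑ j ∈ Finset.Icc 1 N, (E * ((a j : ℂ) * (e - 1) / d j) + A j / B j
        - A j / (B j * (1 + B j * z))) := Finset.sum_congr rfl key
  rw [Finset.sum_sub_distrib, Finset.sum_add_distrib] at hsum_eq
  rw [hR₀, hC₀]
  have hm1 : E * ∑ j ∈ Finset.Icc 1 N, (a j : ℂ) * zα / (1 + (b j : ℂ) * zα) =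
      ∑ j ∈ Finset.Icc 1 N, E * ((a j : ℂ) * zα / (1 + (b j : ℂ) * zα)) := Finset.mul_sum _ _ _
  have hm2 : E * ∑ j ∈ Finset.Icc 1 N, (a j : ℂ) * (e - 1) / d j =
      ∑ j ∈ Finset.Icc 1 N, E * ((a j : ℂ) * (e - 1) / d j) := Finset.mul_sum _ _ _
  linear_combination hsum_eq + hm1 - hm2
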